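/- Let (B,S) be an S5-subordination algebra. The relation Q : B → NI(B) given by a Q I iff a ∈ I is an isomorphism in the category of S5-subordination algebras and compatible subordinations, with inverse T given by I T a iff a ∈ S[U(I)]; that is, T ∘ Q = S and Q ∘ T = ≺ on NI(B). -/
import Mathlib


open Set

/-- Image of a set under a relation: `S[X] = {b | ∃ x ∈ X, x S b}`. -/
def relImg {B₁ B₂ : Type*} (S : B₁ → B₂ → Prop) (X : Set B₁) : Set B₂ :=
  {b | ∃ x ∈ X, S x b}

/-- Preimage of a set under a relation: `S⁻¹[X] = {a | ∃ x ∈ X, a S x}`. -/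
def relPre {B₁ B₂ : Type*} (S : B₁ → B₂ → Prop) (X : Set B₂) : Set B₁ :=
  {a | ∃ x ∈ X, S a x}

/-- Relation composition: `a (T₂ ∘ T₁) c` iff `∃ b, a T₁ b ∧ b T₂ c`. -/
def relComp {B₁ B₂ B₃ : Type*} (T₂ : B₂ → B₃ → Prop) (T₁ : B₁ → B₂ → Prop) :
    B₁ → B₃ → Prop :=
  fun a c => ∃ b, T₁ a b ∧ T₂ b c

/-- Pointwise complement of a set: `¬X = {¬x | x ∈ X}`. -/
def complSet {B : Type*} [BooleanAlgebra B] (X : Set B) : Set B := (·ᶜ) '' X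

/-- A subordination between boolean algebras (axioms S1–S4). -/
structure IsSubord {B₁ B₂ : Type*} [BooleanAlgebra B₁] [BooleanAlgebra B₂]
    (T : B₁ → B₂ → Prop) : Prop where
  rel_bot : T ⊥ ⊥
  rel_top : T ⊤ ⊤
  sup_left : ∀ a b c, T a c → T b c → T (a ⊔ b) c
  inf_right : ∀ a c d, T a c → T a d → T a (c ⊓ d)
  mono : ∀ a b c d, a ≤ b → T b c → c ≤ d → T a d

/-- An S5-subordination on a boolean algebra (axioms S1–S7). -/
structure IsS5Sub {B : Type*} [BooleanAlgebra B] (S : B → B → Prop)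
    extends IsSubord S : Prop where
  le_of_rel : ∀ a b, S a b → a ≤ b
  compl_rel : ∀ a b, S a b → S bᶜ aᶜ
  dense : ∀ a b, S a b → ∃ c, S a c ∧ S c b

/-- A compatible subordination between S5-subordination algebras. -/
def IsCompat {B₁ B₂ : Type*} [BooleanAlgebra B₁] [BooleanAlgebra B₂]
    (S₁ : B₁ → B₁ → Prop) (S₂ : B₂ → B₂ → Prop) (T : B₁ → B₂ → Prop) : Prop :=
  IsSubord T ∧ relComp S₂ T = T ∧ relComp T S₁ = T

/-- Ideal of a boolean algebra (as a set). -/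
def IsIdeal {B : Type*} [BooleanAlgebra B] (I : Set B) : Prop :=
  ⊥ ∈ I ∧ (∀ a b : B, a ≤ b → b ∈ I → a ∈ I) ∧ (∀ a b : B, a ∈ I → b ∈ I → a ⊔ b ∈ I)

/-- Round ideal: an ideal with `I = S⁻¹[I]`. -/
def IsRoundIdeal {B : Type*} [BooleanAlgebra B] (S : B → B → Prop) (I : Set B) : Prop :=
  IsIdeal I ∧ relPre S I = I

/-- The ideal generated by a set: intersection of all ideals containing it. -/
def idealGen {B : Type*} [BooleanAlgebra B] (X : Set B) : Set B :=
  ⋂₀ {J | IsIdeal J ∧ X ⊆ J}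

/-- The pseudocomplement of a round ideal: `I* = ¬S[U(I)]`. -/
def pstar {B : Type*} [BooleanAlgebra B] (S : B → B → Prop) (I : Set B) : Set B :=
  complSet (relImg S (upperBounds I))

/-- The well-inside relation on round ideals: `I ≺ J` iff `U(I) ∩ J ≠ ∅`. -/
def precR {B : Type*} [BooleanAlgebra B] (I J : Set B) : Prop :=
  (upperBounds I ∩ J).Nonempty

/-- Normal round ideal: a round ideal with `I = I**`. -/
def IsNormalRoundIdeal {B : Type*} [BooleanAlgebra B] (S : B → B → Prop) (I : Set B) : Prop :=
  IsRoundIdeal S I ∧ pstar S (pstar S I) = I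

/-- The dual of a subordination: `b T̃ a` iff `¬a T ¬b`. -/
def relDual {B₁ B₂ : Type*} [BooleanAlgebra B₁] [BooleanAlgebra B₂]
    (T : B₁ → B₂ → Prop) : B₂ → B₁ → Prop :=
  fun b a => T aᶜ bᶜ

/-- Continuity of a compatible subordination. -/
def IsContinuousSub {B₁ B₂ : Type*} [BooleanAlgebra B₁] [BooleanAlgebra B₂]
    (S₁ : B₁ → B₁ → Prop) (S₂ : B₂ → B₂ → Prop) (T : B₁ → B₂ → Prop) : Prop :=
  ∀ b₁ b₂, S₂ b₁ b₂ → ∃ a, relDual T b₁ a ∧ ∀ a', relDual T b₂ a' → S₁ a a'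

/-- Functional subordination: `T̃ ∘ T ⊆ S₁` and `S₂ ⊆ T ∘ T̃`. -/
def IsFunctionalSub {B₁ B₂ : Type*} [BooleanAlgebra B₁] [BooleanAlgebra B₂]
    (S₁ : B₁ → B₁ → Prop) (S₂ : B₂ → B₂ → Prop) (T : B₁ → B₂ → Prop) : Prop :=
  (∀ a a', relComp (relDual T) T a a' → S₁ a a') ∧
  (∀ b b', S₂ b b' → relComp T (relDual T) b b')

section Aux

variable {B : Type*} [BooleanAlgebra B] {S : B → B → Prop}

lemma mem_pstar_iff {I : Set B} {x : B} :
    x ∈ pstar S I ↔ ∃ u ∈ upperBounds I, S u xᶜ := by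
  constructor
  · rintro ⟨v, ⟨u, hu, huv⟩, rfl⟩
    exact ⟨u, hu, by simpa using huv⟩
  · rintro ⟨u, hu, h⟩
    exact ⟨xᶜ, ⟨u, hu, h⟩, by simp⟩

lemma pstar_anti {A C : Set B} (h : A ⊆ C) : pstar S C ⊆ pstar S A := by
  intro x hx
  rw [mem_pstar_iff] at hx ⊢
  obtain ⟨u, hu, hs⟩ := hx
  exact ⟨u, fun y hy => hu (h hy), hs⟩

lemma pstar_roundIdeal (hS : IsS5Sub S) (I : Set B) : IsRoundIdeal S (pstar S I) := by
  constructor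
  · refine ⟨?_, ?_, ?_⟩
    · rw [mem_pstar_iff]
      exact ⟨⊤, fun y _ => le_top, by simpa using hS.rel_top⟩
    · intro a b hab hb
      rw [mem_pstar_iff] at hb ⊢
      obtain ⟨u, hu, hs⟩ := hb
      exact ⟨u, hu, hS.mono _ _ _ _ le_rfl hs (compl_le_compl hab)⟩
    · intro a b ha hb
      rw [mem_pstar_iff] at ha hb ⊢
      obtain ⟨u, hu, hsu⟩ := ha
      obtain ⟨v, hv, hsv⟩ := hb
      refine ⟨u ⊓ v, fun y hy => le_inf (hu hy) (hv hy), ?_⟩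
      have h1 : S (u ⊓ v) aᶜ := hS.mono _ _ _ _ inf_le_left hsu le_rfl
      have h2 : S (u ⊓ v) bᶜ := hS.mono _ _ _ _ inf_le_right hsv le_rfl
      have h3 := hS.inf_right _ _ _ h1 h2
      simpa [compl_sup] using h3
  · ext x
    constructor
    · rintro ⟨w, hw, hxw⟩
      rw [mem_pstar_iff] at hw ⊢
      obtain ⟨u, hu, hs⟩ := hw
      refine ⟨wᶜ, fun y hy => (hu hy).trans (hS.le_of_rel _ _ hs), ?_⟩
      exact hS.compl_rel _ _ hxw
    · intro hx
      rw [mem_pstar_iff] at hx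
      obtain ⟨u, hu, hs⟩ := hx
      obtain ⟨c, hc1, hc2⟩ := hS.dense _ _ hs
      refine ⟨cᶜ, ?_, ?_⟩
      · rw [mem_pstar_iff]
        exact ⟨u, hu, by simpa using hc1⟩
      · have := hS.compl_rel _ _ hc2
        simpa using this

lemma subset_pstar_pstar (hS : IsS5Sub S) {I : Set B} (hI : IsRoundIdeal S I) :
    I ⊆ pstar S (pstar S I) := by
  intro x hx
  have hx' : x ∈ relPre S I := by rw [hI.2]; exact hx
  obtain ⟨y, hy, hxy⟩ := hx'
  rw [mem_pstar_iff]
  refine ⟨yᶜ, ?_, hS.compl_rel _ _ hxy⟩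
  intro w hw
  rw [mem_pstar_iff] at hw
  obtain ⟨u, hu, hs⟩ := hw
  have h1 : w ≤ uᶜ := le_compl_comm.mp (hS.le_of_rel _ _ hs)
  exact h1.trans (compl_le_compl (hu hy))

lemma pstar_pstar_pstar_eq (hS : IsS5Sub S) {I : Set B} (hI : IsRoundIdeal S I) :
    pstar S (pstar S (pstar S I)) = pstar S I :=
  le_antisymm (pstar_anti (subset_pstar_pstar hS hI))
    (subset_pstar_pstar hS (pstar_roundIdeal hS I))

end Aux

/-- `Q : B → NI(B)`, `a Q I ↔ a ∈ I`, is an isomorphism in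
`SubS5^S` with inverse `T`, `I T a ↔ a ∈ S[U(I)]`: `T ∘ Q = S` and
`Q ∘ T = ≺` on `NI(B)`. -/
theorem stmt11 {B : Type*} [BooleanAlgebra B] (S : B → B → Prop) (hS : IsS5Sub S) :
    (∀ a b : B,
      (∃ I : Set B, IsNormalRoundIdeal S I ∧ a ∈ I ∧ b ∈ relImg S (upperBounds I)) ↔
        S a b) ∧
    (∀ I J : Set B, IsNormalRoundIdeal S I → IsNormalRoundIdeal S J →
      ((∃ a : B, a ∈ relImg S (upperBounds I) ∧ a ∈ J) ↔ precR I J)) := by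
  constructor
  · intro a b
    constructor
    · rintro ⟨I, _, haI, u, hu, hub⟩
      exact hS.mono _ _ _ _ (hu haI) hub le_rfl
    · intro hab
      obtain ⟨c₁, hac₁, hc₁b⟩ := hS.dense _ _ hab
      obtain ⟨c₂, hc₁c₂, hc₂b⟩ := hS.dense _ _ hc₁b
      set J : Set B := {x | S x c₁} with hJ
      have hJround : IsRoundIdeal S J := by
        constructor
        · refine ⟨hS.mono _ _ _ _ le_rfl hS.rel_bot bot_le, ?_, ?_⟩
          · intro x y hxy hy
            exact hS.mono _ _ _ _ hxy hy le_rfl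
          · intro x y hx hy
            exact hS.sup_left _ _ _ hx hy
        · ext x
          constructor
          · rintro ⟨y, hy, hxy⟩
            exact hS.mono _ _ _ _ le_rfl hxy (hS.le_of_rel _ _ hy)
          · intro hx
            obtain ⟨c, h1, h2⟩ := hS.dense _ _ hx
            exact ⟨c, h2, h1⟩
      refine ⟨pstar S (pstar S J), ⟨pstar_roundIdeal hS _, ?_⟩,
        subset_pstar_pstar hS hJround hac₁, ⟨c₂, ?_, hc₂b⟩⟩
      · exact congrArg (pstar S) (pstar_pstar_pstar_eq hS hJround)
      · -- c₂ is an upper bound of J**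
        intro x hx
        -- J** ⊆ (J_{c₁ᶜ})* since J_{c₁ᶜ} ⊆ J*
        have hsub : {w : B | S w c₁ᶜ} ⊆ pstar S J := by
          intro w hw
          rw [mem_pstar_iff]
          refine ⟨c₁, fun y hy => hS.le_of_rel _ _ hy, ?_⟩
          have := hS.compl_rel _ _ hw
          simpa using this
        have hx' : x ∈ pstar S {w : B | S w c₁ᶜ} := pstar_anti hsub hx
        rw [mem_pstar_iff] at hx'
        obtain ⟨u, hu, hs⟩ := hx'
        have h1 : c₂ᶜ ≤ u := hu (hS.compl_rel _ _ hc₁c₂)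
        have h2 : c₂ᶜ ≤ xᶜ := h1.trans (hS.le_of_rel _ _ hs)
        exact compl_le_compl_iff_le.mp h2
  · intro I J hI hJ
    constructor
    · rintro ⟨a, ⟨u, hu, hua⟩, haJ⟩
      exact ⟨a, fun y hy => (hu hy).trans (hS.le_of_rel _ _ hua), haJ⟩
    · rintro ⟨u, huI, huJ⟩
      have hu' : u ∈ relPre S J := by rw [hJ.1.2]; exact huJ
      obtain ⟨y, hyJ, huy⟩ := hu'
      exact ⟨y, ⟨u, huI, huy⟩, hyJ⟩
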